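/- Let R₀ be a Noetherian ring and R = ⊕_{m∈ℕ} R_m an ℕ-graded finitely generated R₀-algebra. Then there exists a positive integer d such that R_{dm} = (R_d)^m for all positive integers m. -/

import Mathlib

open DirectSum

section Aux

variable {A₀ A : Type*} [CommRing A₀] [CommRing A] [Algebra A₀ A]
variable (𝒜 : ℕ → Submodule A₀ A) [GradedAlgebra 𝒜]

private lemma aux_monomial_mem {n : ℕ} (f : Fin n → A) (dg : Fin n → ℕ)
    (hf : ∀ i, f i ∈ 𝒜 (dg i)) (a : Fin n → ℕ) :
    (∏ i, f i ^ a i) ∈ 𝒜 (∑ i, a i * dg i) := by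
  classical
  induction (Finset.univ : Finset (Fin n)) using Finset.induction with
  | empty => simp only [Finset.prod_empty, Finset.sum_empty]; exact SetLike.one_mem_graded 𝒜
  | insert _ _ hx ih =>
      rw [Finset.prod_insert hx, Finset.sum_insert hx]
      exact SetLike.mul_mem_graded (by simpa [smul_eq_mul] using SetLike.pow_mem_graded _ (hf _)) ih

private lemma aux_mul_le (i j : ℕ) : 𝒜 i * 𝒜 j ≤ 𝒜 (i + j) :=
  Submodule.mul_le.2 fun _ hx _ hy => SetLike.mul_mem_graded hx hy

private lemma aux_pow_le (d : ℕ) : ∀ m : ℕ, 0 < m → 𝒜 d ^ m ≤ 𝒜 (d * m) := by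
  intro m hm
  induction m with
  | zero => omega
  | succ m ih =>
      rcases Nat.eq_zero_or_pos m with rfl | hm'
      · simp
      · calc 𝒜 d ^ (m + 1) = 𝒜 d ^ m * 𝒜 d := pow_succ _ _
          _ ≤ 𝒜 (d * m) * 𝒜 d := mul_le_mul_left (ih hm') _
          _ ≤ 𝒜 (d * m + d) := aux_mul_le 𝒜 _ _
          _ = 𝒜 (d * (m + 1)) := by ring_nf

private lemma aux_closure_rep {n : ℕ} (f : Fin n → A) {y : A}
    (hy : y ∈ Submonoid.closure (Set.range f)) :
    ∃ a : Fin n → ℕ, y = ∏ i, f i ^ a i := by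
  classical
  induction hy using Submonoid.closure_induction with
  | mem x hx =>
      obtain ⟨i, rfl⟩ := hx
      exact ⟨Pi.single i 1, by
        rw [Finset.prod_eq_single i (fun j _ hj => by simp [Pi.single_eq_of_ne hj])
          (by simp)]
        simp⟩
  | one => exact ⟨0, by simp⟩
  | mul x y hx hy ihx ihy =>
      obtain ⟨a, rfl⟩ := ihx
      obtain ⟨b, rfl⟩ := ihy
      exact ⟨a + b, by simp [pow_add, Finset.prod_mul_distrib]⟩

private lemma aux_grade_eq_span {n : ℕ} (f : Fin n → A) (dg : Fin n → ℕ)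
    (hf : ∀ i, f i ∈ 𝒜 (dg i)) (hadj : Algebra.adjoin A₀ (Set.range f) = ⊤) (N : ℕ) :
    𝒜 N = Submodule.span A₀
      {x | ∃ a : Fin n → ℕ, ∑ i, a i * dg i = N ∧ x = ∏ i, f i ^ a i} := by
  classical
  apply le_antisymm
  · intro x hx
    have hx' : x ∈ Subalgebra.toSubmodule (Algebra.adjoin A₀ (Set.range f)) := by
      rw [hadj]; trivial
    rw [Algebra.adjoin_eq_span] at hx'
    have key : Submodule.span A₀ (Submonoid.closure (Set.range f) : Set A) ≤
        (Submodule.span A₀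
          {x | ∃ a : Fin n → ℕ, ∑ i, a i * dg i = N ∧ x = ∏ i, f i ^ a i}).comap
          (GradedAlgebra.proj 𝒜 N) := by
      rw [Submodule.span_le]
      intro y hy
      obtain ⟨a, rfl⟩ := aux_closure_rep f hy
      have hmem : (∏ i, f i ^ a i) ∈ 𝒜 (∑ i, a i * dg i) := aux_monomial_mem 𝒜 f dg hf a
      rw [SetLike.mem_coe, Submodule.mem_comap, GradedAlgebra.proj_apply]
      by_cases hN : (∑ i, a i * dg i) = N
      · rw [DirectSum.decompose_of_mem_same 𝒜 (hN ▸ hmem)]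
        exact Submodule.subset_span ⟨a, hN, rfl⟩
      · rw [DirectSum.decompose_of_mem_ne 𝒜 hmem hN]
        exact Submodule.zero_mem _
    have := key hx'
    simpa only [Submodule.mem_comap, GradedAlgebra.proj_apply,
      DirectSum.decompose_of_mem_same 𝒜 hx] using this
  · rw [Submodule.span_le]
    rintro x ⟨a, ha, rfl⟩
    exact ha ▸ aux_monomial_mem 𝒜 f dg hf a

end Aux

section Comb

private lemma aux_pigeon {n : ℕ} (dg : Fin n → ℕ) (e : ℕ)
    (hdvd : ∀ i, dg i ≠ 0 → dg i ∣ e) (a : Fin n → ℕ)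
    (h : n * e < ∑ i, a i * dg i) :
    ∃ i c, c * dg i = e ∧ c ≤ a i := by
  by_contra hc
  push_neg at hc
  have hb : ∀ i, a i * dg i ≤ e := by
    intro i
    rcases Nat.eq_zero_or_pos (dg i) with h0 | h0
    · simp [h0]
    · have hdv : dg i ∣ e := hdvd i (by omega)
      have hce : (e / dg i) * dg i = e := Nat.div_mul_cancel hdv
      have : a i < e / dg i := hc i (e / dg i) hce
      calc a i * dg i ≤ (e / dg i) * dg i := Nat.mul_le_mul_right _ (by omega)
        _ = e := hce
  have : ∑ i, a i * dg i ≤ ∑ _i : Fin n, e := Finset.sum_le_sum fun i _ => hb i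
  simp at this
  omega

private lemma aux_extract {n : ℕ} (dg : Fin n → ℕ) (e : ℕ)
    (hdvd : ∀ i, dg i ≠ 0 → dg i ∣ e) (k : ℕ) :
    ∀ a : Fin n → ℕ, (n + k) * e ≤ ∑ i, a i * dg i →
      ∃ b : Fin n → ℕ, (∀ i, b i ≤ a i) ∧ ∑ i, b i * dg i = k * e := by
  induction k with
  | zero => exact fun a _ => ⟨0, fun i => Nat.zero_le _, by simp⟩
  | succ k ih =>
      intro a ha
      rcases Nat.eq_zero_or_pos e with rfl | he
      · exact ⟨0, fun i => Nat.zero_le _, by simp⟩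
      have hlt : n * e < ∑ i, a i * dg i := by nlinarith
      obtain ⟨i, c, hce, hca⟩ := aux_pigeon dg e hdvd a hlt
      set s₀ : Fin n → ℕ := Pi.single i c with hs₀
      set a' : Fin n → ℕ := a - s₀ with ha'
      have hsingle : ∀ j, s₀ j ≤ a j := by
        intro j
        rcases eq_or_ne j i with rfl | hj
        · simpa [hs₀] using hca
        · simp [hs₀, Pi.single_eq_of_ne hj]
      have haeq : a' + Pi.single i c = a := by
        funext j
        simp only [Pi.add_apply, ha', Pi.sub_apply]
        exact Nat.sub_add_cancel (hsingle j)
      have hsum_single : ∑ j, s₀ j * dg j = e := by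
        rw [Finset.sum_eq_single i (fun j _ hj => by simp [hs₀, Pi.single_eq_of_ne hj]) (by simp)]
        simpa [hs₀] using hce
      have hsum : ∑ j, a' j * dg j + e = ∑ j, a j * dg j := by
        calc ∑ j, a' j * dg j + e
            = ∑ j, a' j * dg j + ∑ j, s₀ j * dg j := by rw [hsum_single]
          _ = ∑ j, (a' j * dg j + s₀ j * dg j) := (Finset.sum_add_distrib).symm
          _ = ∑ j, a j * dg j := by
              refine Finset.sum_congr rfl fun j _ => ?_
              rw [← add_mul]
              congr 1
              exact congrFun haeq j
      obtain ⟨b', hb'le, hb'sum⟩ := ih a' (by nlinarith [hsum, ha])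
      refine ⟨b' + s₀, fun j => ?_, ?_⟩
      · calc (b' + s₀) j = b' j + s₀ j := rfl
          _ ≤ a' j + s₀ j := by gcongr; exact hb'le j
          _ = a j := congrFun haeq j
      · calc ∑ j, (b' + s₀) j * dg j
            = ∑ j, (b' j * dg j + s₀ j * dg j) := by
              refine Finset.sum_congr rfl fun j _ => ?_; rw [← add_mul]; rfl
          _ = ∑ j, b' j * dg j + ∑ j, s₀ j * dg j := Finset.sum_add_distrib
          _ = k * e + e := by rw [hb'sum, hsum_single]
          _ = (k + 1) * e := by ring

end Comb

/-- Bourbaki's lemma (Lemma 4.4): if `R₀` is Noetherian and `R = ⊕_{m ∈ ℕ} R_m` is an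
`ℕ`-graded finitely generated `R₀`-algebra, then there is `d > 0` with
`R_{dm} = (R_d)^m` for all `m > 0`. -/
theorem stmt9 {A₀ A : Type*} [CommRing A₀] [CommRing A] [Algebra A₀ A]
    [IsNoetherianRing A₀]
    (𝒜 : ℕ → Submodule A₀ A) [GradedAlgebra 𝒜] (hfg : Algebra.FiniteType A₀ A) :
    ∃ d : ℕ, 0 < d ∧ ∀ m : ℕ, 0 < m → 𝒜 (d * m) = 𝒜 d ^ m := by
  classical
  obtain ⟨s, hs⟩ := hfg.out
  -- homogeneous generating set
  set T : Finset A := s.biUnion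
    (fun x => (DirectSum.decompose 𝒜 x).support.image fun i => ((DirectSum.decompose 𝒜 x i : A)))
    with hT
  set n : ℕ := T.card with hn
  set f : Fin n → A := fun i => ((T.equivFin.symm i : T) : A) with hfdef
  have hrange : Set.range f = (T : Set A) := by
    ext x
    constructor
    · rintro ⟨i, rfl⟩; exact (T.equivFin.symm i).2
    · intro hx; exact ⟨T.equivFin ⟨x, hx⟩, by simp [hfdef]⟩
  have homog : ∀ i : Fin n, ∃ k, f i ∈ 𝒜 k := by
    intro i
    have : f i ∈ T := by rw [← Finset.mem_coe, ← hrange]; exact ⟨i, rfl⟩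
    rw [hT, Finset.mem_biUnion] at this
    obtain ⟨x, -, hx⟩ := this
    rw [Finset.mem_image] at hx
    obtain ⟨k, -, hk⟩ := hx
    exact ⟨k, hk ▸ SetLike.coe_mem _⟩
  set dg : Fin n → ℕ := fun i => (homog i).choose with hdg
  have hf : ∀ i, f i ∈ 𝒜 (dg i) := fun i => (homog i).choose_spec
  have hadj : Algebra.adjoin A₀ (Set.range f) = ⊤ := by
    rw [hrange, eq_top_iff, ← hs]
    apply Algebra.adjoin_le
    intro x hx
    rw [← DirectSum.sum_support_decompose 𝒜 x]
    refine Subalgebra.sum_mem _ fun k hk => Algebra.subset_adjoin ?_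
    rw [hT, Finset.coe_biUnion]
    exact Set.mem_biUnion hx (Finset.mem_coe.2 (Finset.mem_image_of_mem _ hk))
  set e : ℕ := ∏ i ∈ Finset.univ.filter (fun i => dg i ≠ 0), dg i with he
  have he0 : 0 < e := Finset.prod_pos fun i hi => by
    rw [Finset.mem_filter] at hi; omega
  have hdvd : ∀ i, dg i ≠ 0 → dg i ∣ e :=
    fun i hi => Finset.dvd_prod_of_mem _ (by simp [hi])
  refine ⟨(n + 1) * e, Nat.mul_pos n.succ_pos he0, fun m hm => ?_⟩
  set d : ℕ := (n + 1) * e with hd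
  -- monomials of degree d*m lie in (𝒜 d)^m
  have main : ∀ m : ℕ, 0 < m → ∀ a : Fin n → ℕ, ∑ i, a i * dg i = d * m →
      (∏ i, f i ^ a i) ∈ 𝒜 d ^ m := by
    intro m hm
    induction m with
    | zero => omega
    | succ m ih =>
        intro a ha
        rcases Nat.eq_zero_or_pos m with rfl | hm'
        · rw [pow_one]
          have ha1 : ∑ i, a i * dg i = d := by omega
          exact ha1 ▸ aux_monomial_mem 𝒜 f dg hf a
        · have hbig : (n + (n + 1)) * e ≤ ∑ i, a i * dg i := by
            rw [ha, hd]
            have h1 : (n + (n + 1)) * e ≤ (n + 1) * e * 2 := by nlinarith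
            have h2 : (n + 1) * e * 2 ≤ (n + 1) * e * (m + 1) := by
              have : 2 ≤ m + 1 := by omega
              exact Nat.mul_le_mul_left _ this
            omega
          obtain ⟨b, hble, hbsum⟩ := aux_extract dg e hdvd (n + 1) a hbig
          set c : Fin n → ℕ := a - b with hc
          have haeq : ∀ j, b j + c j = a j := fun j =>
            Nat.add_sub_cancel' (hble j)
          have hcsum : ∑ i, c i * dg i = d * m := by
            have : ∑ i, b i * dg i + ∑ i, c i * dg i = ∑ i, a i * dg i := by
              rw [← Finset.sum_add_distrib]
              exact Finset.sum_congr rfl fun j _ => by rw [← add_mul, haeq j]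
            rw [ha, hbsum, ← hd] at this
            have hdm : d * (m + 1) = d + d * m := by ring
            omega
          have hsplit : (∏ i, f i ^ a i) = (∏ i, f i ^ b i) * (∏ i, f i ^ c i) := by
            rw [← Finset.prod_mul_distrib]
            exact Finset.prod_congr rfl fun j _ => by rw [← pow_add, haeq j]
          rw [hsplit, pow_succ']
          have hbd : ∑ i, b i * dg i = d := by rw [hbsum, hd]
          exact Submodule.mul_mem_mul (hbd ▸ aux_monomial_mem 𝒜 f dg hf b)
            (ih hm' c hcsum)
  apply le_antisymm
  · rw [aux_grade_eq_span 𝒜 f dg hf hadj (d * m), Submodule.span_le]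
    rintro x ⟨a, ha, rfl⟩
    exact main m hm a ha
  · exact aux_pow_le 𝒜 d m hm
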